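/- Let Δx, Δy, Δt > 0 and define Gf : ℝ × ℝ → ℝ by Gf(q,r) = 1 − 2(Δt/Δx²)(1 − cos(qΔx)) − 2(Δt/Δy²)(1 − cos(rΔy)). Then |Gf(q,r)| ≤ 1 holds for all (q,r) ∈ ℝ × ℝ if and only if Δt/Δx² + Δt/Δy² ≤ 1/2. -/
import Mathlib

/-- `|Gf(q,r)| ≤ 1` for all `(q,r)` if and only if
`Δt/Δx² + Δt/Δy² ≤ 1/2`. -/
theorem von_neumann_stability_iff
    (Δx Δy Δt : ℝ) (hx : 0 < Δx) (hy : 0 < Δy) (ht : 0 < Δt)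
    (Gf : ℝ × ℝ → ℝ)
    (hGf : ∀ p : ℝ × ℝ,
      Gf p = 1 - 2 * (Δt / Δx ^ 2) * (1 - Real.cos (p.1 * Δx))
               - 2 * (Δt / Δy ^ 2) * (1 - Real.cos (p.2 * Δy))) :
    (∀ p : ℝ × ℝ, |Gf p| ≤ 1) ↔ Δt / Δx ^ 2 + Δt / Δy ^ 2 ≤ 1 / 2 := by
  have ha : 0 < Δt / Δx ^ 2 := div_pos ht (by positivity)
  have hb : 0 < Δt / Δy ^ 2 := div_pos ht (by positivity)
  constructor
  · intro h
    have hp := h (Real.pi / Δx, Real.pi / Δy)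
    rw [hGf] at hp
    simp only [div_mul_cancel₀ _ hx.ne', div_mul_cancel₀ _ hy.ne',
      Real.cos_pi] at hp
    rw [abs_le] at hp
    linarith [hp.1]
  · intro h p
    rw [hGf, abs_le]
    have c1 := Real.cos_le_one (p.1 * Δx)
    have c2 := Real.cos_le_one (p.2 * Δy)
    have c1' := Real.neg_one_le_cos (p.1 * Δx)
    have c2' := Real.neg_one_le_cos (p.2 * Δy)
    constructor
    · nlinarith
    · nlinarith
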